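/- If R is a noncommutative finite (not necessarily unital) ring, then |Cent(R)| ≥ 4. -/
import Mathlib


/-- The centralizer of `r` in a (not necessarily unital) ring: `{s | r*s = s*r}`. -/
def rCentralizer {R : Type*} [NonUnitalRing R] (r : R) : Set R := {s | r * s = s * r}

/-- The set of all centralizers of elements of `R`. -/
def Cent (R : Type*) [NonUnitalRing R] : Set (Set R) :=
  Set.range (fun r : R => rCentralizer r)

/-- The center of a (not necessarily unital) ring, as a set. -/
def rCenter (R : Type*) [NonUnitalRing R] : Set R := {s | ∀ r : R, r * s = s * r}

/-- For any noncommutative finite ring `R`, `|Cent(R)| ≥ 4`. -/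
theorem four_le_ncard_cent (R : Type*) [NonUnitalRing R] [Finite R]
    (h : ∃ x y : R, x * y ≠ y * x) :
    4 ≤ (Cent R).ncard := by
  obtain ⟨x, y, hxy⟩ := h
  -- membership facts
  have hx0 : x ∈ rCentralizer (0 : R) := by simp [rCentralizer]
  have hy0 : y ∈ rCentralizer (0 : R) := by simp [rCentralizer]
  have hxx : x ∈ rCentralizer x := rfl
  have hyy : y ∈ rCentralizer y := rfl
  have hss : (x + y) ∈ rCentralizer (x + y) := rfl
  have hxny : x ∉ rCentralizer y := fun hm => hxy (hm.symm)
  have hynx : y ∉ rCentralizer x := fun hm => hxy hm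
  have hxns : x ∉ rCentralizer (x + y) := by
    intro hm
    have hm' : x * x + y * x = x * x + x * y := by
      have this : (x + y) * x = x * (x + y) := hm; rwa [add_mul, mul_add] at this
    exact hxy (add_left_cancel hm').symm
  have hyns : y ∉ rCentralizer (x + y) := by
    intro hm
    have hm' : x * y + y * y = y * x + y * y := by
      have this : (x + y) * y = y * (x + y) := hm; rwa [add_mul, mul_add] at this
    exact hxy (add_right_cancel hm')
  have hsnx : (x + y) ∉ rCentralizer x := by
    intro hm
    have hm' : x * x + x * y = x * x + y * x := by
      have this : x * (x + y) = (x + y) * x := hm; rwa [mul_add, add_mul] at this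
    exact hxy (add_left_cancel hm')
  have hsny : (x + y) ∉ rCentralizer y := by
    intro hm
    have hm' : y * x + y * y = x * y + y * y := by
      have this : y * (x + y) = (x + y) * y := hm; rwa [mul_add, add_mul] at this
    exact hxy (add_right_cancel hm').symm
  -- distinctness
  have h01 : rCentralizer (0 : R) ≠ rCentralizer x := fun e => hynx (e ▸ hy0)
  have h02 : rCentralizer (0 : R) ≠ rCentralizer y := fun e => hxny (e ▸ hx0)
  have h03 : rCentralizer (0 : R) ≠ rCentralizer (x + y) := fun e => hxns (e ▸ hx0)
  have h12 : rCentralizer x ≠ rCentralizer y := fun e => hxny (e ▸ hxx)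
  have h13 : rCentralizer x ≠ rCentralizer (x + y) := fun e => hxns (e ▸ hxx)
  have h23 : rCentralizer y ≠ rCentralizer (x + y) := fun e => hyns (e ▸ hyy)
  have hsub : ({rCentralizer (0 : R), rCentralizer x, rCentralizer y,
      rCentralizer (x + y)} : Set (Set R)) ⊆ Cent R := by
    intro s hs
    simp only [Set.mem_insert_iff, Set.mem_singleton_iff] at hs
    rcases hs with rfl | rfl | rfl | rfl <;> exact ⟨_, rfl⟩
  have hcard : ({rCentralizer (0 : R), rCentralizer x, rCentralizer y,
      rCentralizer (x + y)} : Set (Set R)).ncard = 4 := by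
    rw [Set.ncard_insert_of_notMem (by simp [h01, h02, h03]) (Set.toFinite _),
        Set.ncard_insert_of_notMem (by simp [h12, h13]) (Set.toFinite _),
        Set.ncard_insert_of_notMem (by simp [h23]) (Set.toFinite _),
        Set.ncard_singleton]
  calc 4 = ({rCentralizer (0 : R), rCentralizer x, rCentralizer y,
      rCentralizer (x + y)} : Set (Set R)).ncard := hcard.symm
    _ ≤ (Cent R).ncard := Set.ncard_le_ncard hsub (Set.toFinite _)
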